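/- Let H be a symmetric positive definite n×n real matrix with minimum eigenvalue σ_min(H) > 0. Define f(μ) = ½(Aᵀμ + G)ᵀ H⁻¹ (Aᵀμ + G) + Bᵀμ and ξ(μ) = H⁻¹(-Aᵀμ - G). If ξ* = ξ(μ*) for a minimizer μ* of f over {μ ≥ 0}, then for any feasible μ ≥ 0, ‖ξ(μ) - ξ*‖² ≤ (2/σ_min(H)) · (f(μ) - f(μ*)). -/

import Mathlib

open Matrix

lemma dot_symm_aux {n : ℕ} (M : Matrix (Fin n) (Fin n) ℝ) (hM : M.IsHermitian)
    (a b : Fin n → ℝ) : a ⬝ᵥ M *ᵥ b = b ⬝ᵥ M *ᵥ a := by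
  rw [dotProduct_mulVec, dotProduct_comm, ← mulVec_transpose]
  have : Mᵀ = M := by
    have := hM; rwa [Matrix.IsHermitian, conjTranspose_eq_transpose_of_trivial] at this
  rw [this]

lemma eig_min_bound {n : ℕ} (hn : 0 < n) (H : Matrix (Fin n) (Fin n) ℝ) (hH : H.PosDef)
    (w : Fin n → ℝ) :
    (⨅ i, hH.isHermitian.eigenvalues i) * (w ⬝ᵥ w) ≤ w ⬝ᵥ H *ᵥ w := by
  haveI : Nonempty (Fin n) := ⟨⟨0, hn⟩⟩
  set U : Matrix (Fin n) (Fin n) ℝ := (hH.isHermitian.eigenvectorUnitary : Matrix (Fin n) (Fin n) ℝ) with hU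
  have hUU : U * star U = 1 := mem_unitaryGroup_iff.mp hH.isHermitian.eigenvectorUnitary.2
  have hUU' : star U * U = 1 := mem_unitaryGroup_iff'.mp hH.isHermitian.eigenvectorUnitary.2
  set y := (star U) *ᵥ w with hy
  have hw : U *ᵥ y = w := by rw [hy, mulVec_mulVec, hUU, one_mulVec]
  have hstarU : Uᵀ = star U := by
    rw [star_eq_conjTranspose, conjTranspose_eq_transpose_of_trivial]
  have hdot : ∀ z : Fin n → ℝ, (U *ᵥ y) ⬝ᵥ z = y ⬝ᵥ ((star U) *ᵥ z) := by
    intro z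
    rw [dotProduct_comm, dotProduct_mulVec, ← mulVec_transpose, hstarU, dotProduct_comm]
  have h1 : w ⬝ᵥ w = y ⬝ᵥ y := by
    conv_lhs => rw [← hw]
    rw [hdot, mulVec_mulVec, hUU', one_mulVec]
  have h2 : w ⬝ᵥ H *ᵥ w = ∑ i, hH.isHermitian.eigenvalues i * (y i)^2 := by
    conv_lhs => rw [← hw]
    rw [hdot, mulVec_mulVec, mulVec_mulVec]
    have hdiag : star U * H * U = diagonal (RCLike.ofReal ∘ hH.isHermitian.eigenvalues) := by
      simpa [hU] using hH.isHermitian.conjStarAlgAut_star_eigenvectorUnitary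
    rw [show (star U * H * U) = diagonal (RCLike.ofReal ∘ hH.isHermitian.eigenvalues) from hdiag]
    simp [dotProduct, mulVec_diagonal, Function.comp]
    apply Finset.sum_congr rfl
    intro i _
    ring
  rw [h1, h2]
  have hle : ∀ i, (⨅ j, hH.isHermitian.eigenvalues j) ≤ hH.isHermitian.eigenvalues i :=
    fun i => ciInf_le (Finite.bddBelow_range _) i
  calc (⨅ i, hH.isHermitian.eigenvalues i) * (y ⬝ᵥ y)
      = ∑ i, (⨅ j, hH.isHermitian.eigenvalues j) * (y i)^2 := by
        rw [dotProduct, Finset.mul_sum]; apply Finset.sum_congr rfl; intro i _; ring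
    _ ≤ ∑ i, hH.isHermitian.eigenvalues i * (y i)^2 := by
        apply Finset.sum_le_sum; intro i _
        exact mul_le_mul_of_nonneg_right (hle i) (sq_nonneg _)

theorem primal_dual_error_bound (n m : ℕ) (hn : 0 < n)
    (H : Matrix (Fin n) (Fin n) ℝ) (hH : H.PosDef)
    (A : Matrix (Fin m) (Fin n) ℝ) (B : Fin m → ℝ) (G : Fin n → ℝ)
    (σ : ℝ) (hσ : σ = ⨅ i, hH.isHermitian.eigenvalues i)
    (f : (Fin m → ℝ) → ℝ)
    (hf : ∀ μ, f μ = (1 / 2) * ((Aᵀ.mulVec μ + G) ⬝ᵥ H⁻¹.mulVec (Aᵀ.mulVec μ + G))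
        + B ⬝ᵥ μ)
    (ξ : (Fin m → ℝ) → (Fin n → ℝ))
    (hξ : ∀ μ, ξ μ = H⁻¹.mulVec (-(Aᵀ.mulVec μ) - G))
    (μs : Fin m → ℝ) (hμs : ∀ i, 0 ≤ μs i)
    (hmin : ∀ μ : Fin m → ℝ, (∀ i, 0 ≤ μ i) → f μs ≤ f μ) :
    ∀ μ : Fin m → ℝ, (∀ i, 0 ≤ μ i) →
      (ξ μ - ξ μs) ⬝ᵥ (ξ μ - ξ μs) ≤ (2 / σ) * (f μ - f μs) := by
  intro μ hμ
  haveI : Nonempty (Fin n) := ⟨⟨0, hn⟩⟩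
  have hM : (H⁻¹).PosDef := hH.inv
  set M := H⁻¹ with hMdef
  set v : Fin n → ℝ := Aᵀ *ᵥ μs + G with hv
  set u : Fin n → ℝ := Aᵀ *ᵥ (μ - μs) with hu
  set g : ℝ := v ⬝ᵥ M *ᵥ u + B ⬝ᵥ (μ - μs) with hg
  set q : ℝ := u ⬝ᵥ M *ᵥ u with hq
  clear_value v u g q
  -- expansion of f along the segment
  have hexp : ∀ t : ℝ, f (μs + t • (μ - μs)) = f μs + t * g + t^2/2 * q := by
    intro t
    have hvec : Aᵀ *ᵥ (μs + t • (μ - μs)) + G = v + t • u := by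
      rw [mulVec_add, mulVec_smul, hv, hu]
      abel
    rw [hf, hf, hvec]
    have hMl : ∀ a b : Fin n → ℝ, M *ᵥ (a + b) = M *ᵥ a + M *ᵥ b := fun a b => mulVec_add _ _ _
    have hsymm := dot_symm_aux M hM.isHermitian
    rw [mulVec_add, mulVec_smul]
    rw [add_dotProduct, smul_dotProduct, dotProduct_add, dotProduct_add, dotProduct_smul,
        dotProduct_smul]

    have hB : B ⬝ᵥ (μs + t • (μ - μs)) = B ⬝ᵥ μs + t * (B ⬝ᵥ (μ - μs)) := by
      rw [dotProduct_add, dotProduct_smul]; ring_nf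
    rw [hB, hg, hq, hv, hu]
    rw [show (Aᵀ *ᵥ (μ - μs)) ⬝ᵥ M *ᵥ (Aᵀ *ᵥ μs + G) = (Aᵀ *ᵥ μs + G) ⬝ᵥ M *ᵥ (Aᵀ *ᵥ (μ - μs)) from hsymm _ _]
    simp only [smul_eq_mul]
    ring
  -- q ≥ 0
  have hq0 : 0 ≤ q := by
    have := hM.posSemidef.dotProduct_mulVec_nonneg u
    rw [hq]
    simpa using this
  -- f μ - f μs = g + q/2
  have hfd : f μ - f μs = g + q/2 := by
    have h1 := hexp 1
    have : μs + (1:ℝ) • (μ - μs) = μ := by simp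
    rw [this] at h1
    rw [h1]; ring
  -- first-order optimality: 0 ≤ g
  have hfam : ∀ t : ℝ, 0 < t → t ≤ 1 → 0 ≤ g + t/2 * q := by
    intro t ht ht1
    have hfeas : ∀ i, 0 ≤ (μs + t • (μ - μs)) i := by
      intro i
      have : (μs + t • (μ - μs)) i = (1 - t) * μs i + t * μ i := by
        simp [Pi.add_apply, Pi.smul_apply]; ring
      rw [this]
      have := hμs i; have := hμ i
      nlinarith
    have := hmin _ hfeas
    rw [hexp t] at this
    have h2 : 0 ≤ t * g + t^2/2 * q := by linarith
    have h3 : 0 ≤ t * (g + t/2 * q) := by nlinarith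
    exact le_of_not_gt fun hlt => absurd h3 (not_le.mpr (mul_neg_of_pos_of_neg ht hlt))
  have hg0 : 0 ≤ g := by
    by_contra hgneg
    push_neg at hgneg
    rcases eq_or_lt_of_le hq0 with hq0' | hqpos
    · have := hfam 1 one_pos le_rfl
      rw [← hq0'] at this
      linarith
    · set t := min 1 (-g / q) with htdef
      have htpos : 0 < t := lt_min one_pos (div_pos (neg_pos.mpr hgneg) hqpos)
      have ht1 : t ≤ 1 := min_le_left _ _
      have ht2 : t ≤ -g / q := min_le_right _ _
      have := hfam t htpos ht1
      have htq : t * q ≤ -g := (le_div_iff₀ hqpos).mp ht2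
      nlinarith
  -- relate ξ difference to w = M *ᵥ u
  set w : Fin n → ℝ := M *ᵥ u with hw
  clear_value w
  have hxi : ξ μ - ξ μs = -w := by
    have hab : (-(Aᵀ *ᵥ μ) - G) - (-(Aᵀ *ᵥ μs) - G) = -u := by
      rw [hu, mulVec_sub]; abel
    rw [hξ, hξ, ← mulVec_sub, hab, mulVec_neg, hw]
  have hHw : H *ᵥ w = u := by
    rw [hw, mulVec_mulVec, Matrix.mul_nonsing_inv H (isUnit_iff_ne_zero.mpr hH.det_pos.ne'),
      one_mulVec]
  have hqw : q = w ⬝ᵥ H *ᵥ w := by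
    rw [hq, ← hHw]
    exact dotProduct_comm _ _
  -- eigenvalue bound
  have heig : σ * (w ⬝ᵥ w) ≤ q := by
    rw [hqw, hσ]; exact eig_min_bound hn H hH w
  have hσpos : 0 < σ := by
    rw [hσ]
    obtain ⟨i, hi⟩ := exists_eq_ciInf_of_finite (f := fun i => hH.isHermitian.eigenvalues i)
    rw [← hi]
    exact hH.eigenvalues_pos i
  rw [hxi]
  have hLHS : (-w) ⬝ᵥ (-w) = w ⬝ᵥ w := by simp
  rw [hLHS]
  rw [hfd]
  rw [div_mul_eq_mul_div, le_div_iff₀ hσpos]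
  have hc : (w ⬝ᵥ w) * σ = σ * (w ⬝ᵥ w) := mul_comm _ _
  linarith
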